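/- Let H₀ be a self-adjoint operator on a finite-dimensional Hilbert space with nonnegative spectrum and unique ground state |E₀⟩ with eigenvalue 0. For a > 0, b > 0, β > 0, define ρ(a) := Σ_I (e^{−β(a+bE_I)}/(1 − e^{−β(a+bE_I)}))·|E_I⟩⟨E_I| summed over an orthonormal eigenbasis {|E_I⟩} with eigenvalues E_I. Then the normalized states ρ(a)/Tr ρ(a) converge to |E₀⟩⟨E₀| as a → 0⁺. -/

import Mathlib

open Filter

/-- Let `H₀` be self-adjoint on a finite-dimensional Hilbert space with nonnegative
eigenvalues `E_I` (orthonormal eigenbasis `v`), a unique ground state `v i₀` with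
eigenvalue `0`, and `E_I > 0` otherwise.  For `a, b, β > 0` put
`ρ(a) = Σ_I (e^{−β(a+bE_I)}/(1 − e^{−β(a+bE_I)}))·|E_I⟩⟨E_I|`.  Then
`ρ(a)/Tr ρ(a) → |E₀⟩⟨E₀|` as `a → 0⁺`. -/
theorem entropic_ground_state_limit {H : Type*} [NormedAddCommGroup H]
    [InnerProductSpace ℂ H] [FiniteDimensional ℂ H]
    {I : Type*} [Fintype I] (v : OrthonormalBasis I ℂ H)
    (H₀ : H →L[ℂ] H) (hsa : IsSelfAdjoint H₀) (E : I → ℝ)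
    (heig : ∀ i, H₀ (v i) = (E i : ℂ) • v i)
    (i₀ : I) (hE0 : E i₀ = 0) (hpos : ∀ i, i ≠ i₀ → 0 < E i)
    (b β : ℝ) (hb : 0 < b) (hβ : 0 < β) :
    Tendsto (fun a : ℝ =>
        (LinearMap.trace ℂ H
            ((∑ i, ((Real.exp (-(β * (a + b * E i)))
                  / (1 - Real.exp (-(β * (a + b * E i)))) : ℝ) : ℂ) •
                ((ℂ ∙ (v i)).subtypeL ∘L Submodule.orthogonalProjectionOnto (ℂ ∙ (v i)))
              : H →L[ℂ] H) : H →ₗ[ℂ] H))⁻¹ •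
          (∑ i, ((Real.exp (-(β * (a + b * E i)))
                / (1 - Real.exp (-(β * (a + b * E i)))) : ℝ) : ℂ) •
              ((ℂ ∙ (v i)).subtypeL ∘L Submodule.orthogonalProjectionOnto (ℂ ∙ (v i)))))
      (nhdsWithin 0 (Set.Ioi 0))
      (nhds ((ℂ ∙ (v i₀)).subtypeL ∘L Submodule.orthogonalProjectionOnto (ℂ ∙ (v i₀)))) := by
  classical
  set P : I → (H →L[ℂ] H) := fun i =>
    (ℂ ∙ (v i)).subtypeL ∘L Submodule.orthogonalProjectionOnto (ℂ ∙ (v i)) with hP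
  set w : ℝ → I → ℝ := fun a i =>
    Real.exp (-(β * (a + b * E i))) / (1 - Real.exp (-(β * (a + b * E i)))) with hw
  set S : ℝ → ℝ := fun a => ∑ i, w a i with hS
  -- trace of each projector is 1
  have htr : ∀ i, LinearMap.trace ℂ H ((P i : H →L[ℂ] H) : H →ₗ[ℂ] H) = 1 := by
    intro i
    have hx0 : v i ≠ 0 := v.orthonormal.ne_zero i
    have hproj : LinearMap.IsProj (ℂ ∙ (v i)) ((P i : H →L[ℂ] H) : H →ₗ[ℂ] H) := by
      constructor
      · intro y; exact Submodule.coe_mem _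
      · intro y hy
        have : Submodule.orthogonalProjectionOnto (ℂ ∙ (v i)) y = ⟨y, hy⟩ :=
          Submodule.orthogonalProjectionOnto_mem_subspace_eq_self ⟨y, hy⟩
        simp [hP, this]
    rw [hproj.trace, finrank_span_singleton hx0]
    norm_num
  -- the trace of the numerator
  have htrace : ∀ a : ℝ,
      LinearMap.trace ℂ H ((∑ i, ((w a i : ℝ) : ℂ) • P i : H →L[ℂ] H) : H →ₗ[ℂ] H)
        = ((S a : ℝ) : ℂ) := by
    intro a
    push_cast [hS]
    rw [map_sum]
    simp [htr]
  -- nonnegativity of eigenvalues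
  have hE : ∀ i, 0 ≤ E i := by
    intro i
    rcases eq_or_ne i i₀ with h | h
    · rw [h, hE0]
    · exact (hpos i h).le
  -- positivity of weights for a > 0
  have hwpos : ∀ a : ℝ, 0 < a → ∀ i, 0 < w a i := by
    intro a ha i
    have harg : 0 < β * (a + b * E i) :=
      mul_pos hβ (by nlinarith [hE i, mul_nonneg hb.le (hE i)])
    have h1 : Real.exp (-(β * (a + b * E i))) < 1 := Real.exp_lt_one_iff.mpr (by linarith)
    exact div_pos (Real.exp_pos _) (by linarith)
  have hSpos : ∀ a : ℝ, 0 < a → 0 < S a := by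
    intro a ha
    exact Finset.sum_pos (fun i _ => hwpos a ha i) ⟨i₀, Finset.mem_univ i₀⟩
  -- the ground-state weight blows up
  have hwtop : Tendsto (fun a => w a i₀) (nhdsWithin 0 (Set.Ioi 0)) atTop := by
    have heq : ∀ a : ℝ, w a i₀ =
        Real.exp (-(β * a)) * (1 - Real.exp (-(β * a)))⁻¹ := by
      intro a; simp [hw, hE0, div_eq_mul_inv]
    simp only [heq]
    apply Filter.Tendsto.pos_mul_atTop (zero_lt_one)
    · have : Tendsto (fun a : ℝ => Real.exp (-(β * a))) (nhds 0) (nhds 1) := by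
        have := (Real.continuous_exp.comp (by fun_prop : Continuous fun a : ℝ => -(β * a))).tendsto 0
        simpa [Function.comp_def] using this
      exact this.mono_left nhdsWithin_le_nhds
    · apply tendsto_inv_nhdsGT_zero.comp
      rw [tendsto_nhdsWithin_iff]
      constructor
      · have : Tendsto (fun a : ℝ => 1 - Real.exp (-(β * a))) (nhds 0) (nhds 0) := by
          have := ((Real.continuous_exp.comp
            (by fun_prop : Continuous fun a : ℝ => -(β * a))).tendsto 0)
          have h2 : Tendsto (fun a : ℝ => 1 - Real.exp (-(β * a))) (nhds 0)
              (nhds (1 - Real.exp (-(β * 0)))) := (tendsto_const_nhds.sub this)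
          simpa using h2
        exact this.mono_left nhdsWithin_le_nhds
      · filter_upwards [self_mem_nhdsWithin] with a ha
        have : Real.exp (-(β * a)) < 1 :=
          Real.exp_lt_one_iff.mpr (by nlinarith [Set.mem_Ioi.mp ha])
        exact Set.mem_Ioi.mpr (by linarith)
  -- excited weights have finite limits
  have hwi : ∀ i, i ≠ i₀ → Tendsto (fun a => w a i) (nhdsWithin 0 (Set.Ioi 0))
      (nhds (w 0 i)) := by
    intro i hi
    have hden : 1 - Real.exp (-(β * (0 + b * E i))) ≠ 0 := by
      have : Real.exp (-(β * (0 + b * E i))) < 1 :=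
        Real.exp_lt_one_iff.mpr (by nlinarith [mul_pos hβ (mul_pos hb (hpos i hi))])
      linarith
    have hc : ContinuousAt (fun a => w a i) 0 := by
      apply ContinuousAt.div
      · fun_prop
      · fun_prop
      · exact hden
    exact hc.tendsto.mono_left nhdsWithin_le_nhds
  -- ratios of excited weights to ground weight vanish
  have hratio0 : ∀ i, i ≠ i₀ →
      Tendsto (fun a => w a i / S a) (nhdsWithin 0 (Set.Ioi 0)) (nhds 0) := by
    intro i hi
    have hdiv : Tendsto (fun a => w a i / w a i₀) (nhdsWithin 0 (Set.Ioi 0)) (nhds 0) :=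
      (hwi i hi).div_atTop hwtop
    apply squeeze_zero'
    · filter_upwards [self_mem_nhdsWithin] with a ha
      exact div_nonneg (hwpos a ha i).le (hSpos a ha).le
    · filter_upwards [self_mem_nhdsWithin] with a ha
      exact div_le_div_of_nonneg_left (hwpos a ha i).le (hwpos a ha i₀)
        (Finset.single_le_sum (fun j _ => (hwpos a ha j).le) (Finset.mem_univ i₀))
    · exact hdiv
  have hratio1 : Tendsto (fun a => w a i₀ / S a) (nhdsWithin 0 (Set.Ioi 0)) (nhds 1) := by
    have heq : (fun a => 1 - ∑ i ∈ Finset.univ.erase i₀, w a i / S a)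
        =ᶠ[nhdsWithin 0 (Set.Ioi 0)] fun a => w a i₀ / S a := by
      filter_upwards [self_mem_nhdsWithin] with a ha
      have hSne : S a ≠ 0 := (hSpos a ha).ne'
      have hsum : S a = w a i₀ + ∑ i ∈ Finset.univ.erase i₀, w a i := by
        rw [hS]; exact (Finset.add_sum_erase _ _ (Finset.mem_univ i₀)).symm
      have hkey : w a i₀ / S a + ∑ i ∈ Finset.univ.erase i₀, w a i / S a = 1 := by
        rw [← Finset.sum_div, ← add_div, ← hsum, div_self hSne]
      linarith [hkey]
    have h2 : Tendsto (fun a => 1 - ∑ i ∈ Finset.univ.erase i₀, w a i / S a)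
        (nhdsWithin 0 (Set.Ioi 0)) (nhds 1) := by
      have hsum0 : Tendsto (fun a => ∑ i ∈ Finset.univ.erase i₀, w a i / S a)
          (nhdsWithin 0 (Set.Ioi 0)) (nhds 0) := by
        have := tendsto_finset_sum (Finset.univ.erase i₀)
          (fun i hi => hratio0 i (Finset.ne_of_mem_erase hi))
        simpa using this
      simpa using tendsto_const_nhds.sub hsum0
    exact h2.congr' heq
  -- assemble
  have hmain : Tendsto (fun a => ∑ i, (((w a i / S a : ℝ)) : ℂ) • P i)
      (nhdsWithin 0 (Set.Ioi 0)) (nhds (∑ i, (if i = i₀ then (1 : ℂ) else 0) • P i)) := by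
    apply tendsto_finset_sum
    intro i _
    rcases eq_or_ne i i₀ with h | h
    · subst h
      simp only [if_pos rfl]
      exact ((Complex.continuous_ofReal.tendsto 1).comp hratio1).smul_const (P i)
    · simp only [if_neg h]
      have := ((Complex.continuous_ofReal.tendsto 0).comp (hratio0 i h)).smul_const (P i)
      simpa using this
  have hsum_eq : (∑ i, (if i = i₀ then (1 : ℂ) else 0) • P i) = P i₀ := by
    rw [Finset.sum_eq_single i₀]
    · simp
    · intro j _ hj; simp [hj]
    · intro h; exact absurd (Finset.mem_univ i₀) h
  rw [hsum_eq] at hmain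
  refine hmain.congr fun a => ?_
  rw [htrace a, Finset.smul_sum]
  exact Finset.sum_congr rfl fun i _ => by
    rw [smul_smul, Complex.ofReal_div, div_eq_inv_mul]
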